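/- arXiv:1301.2131 — 2 statements merged into one kernel-verified Lean document; each statement's English description precedes it below -/
import Mathlib

section
/- Let λ, λ' ∈ ℂ*, b, b' ∈ ℂ \ {1}, and let V, V' be irreducible Virasoro modules on which every d_k acts pointwise-nilpotently for k large (for each vector v there is K with d_l v = 0 for all l ≥ K). If Ω(λ,b) ⊗ V ≅ Ω(λ',b') ⊗ V' as Virasoro modules, then λ = λ', b = b', and V ≅ V' as Virasoro modules. -/
open Polynomial TensorProduct

/-- The Virasoro commutation relations for a family of operators `d i` (the action of the
basis vectors `d_i`) and a central operator `cc` (the action of the central element `c`) on a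
complex vector space: `[d_i, d_j] = (j - i) d_{i+j} + δ_{i,-j} (i^3 - i)/12 c` and `c` central. -/
def VirRep {V : Type*} [AddCommGroup V] [Module ℂ V]
    (d : ℤ → Module.End ℂ V) (cc : Module.End ℂ V) : Prop :=
  (∀ i : ℤ, cc * d i = d i * cc) ∧
    ∀ i j : ℤ, d i * d j - d j * d i =
      ((j : ℂ) - (i : ℂ)) • d (i + j) +
        (if i + j = 0 then ((i : ℂ) ^ 3 - (i : ℂ)) / 12 else 0) • cc

/-- A subspace invariant under the Virasoro action, i.e. a Virasoro submodule. -/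
def VirInvariant {V : Type*} [AddCommGroup V] [Module ℂ V]
    (d : ℤ → Module.End ℂ V) (cc : Module.End ℂ V) (p : Submodule ℂ V) : Prop :=
  (∀ i : ℤ, ∀ v ∈ p, d i v ∈ p) ∧ ∀ v ∈ p, cc v ∈ p

/-- The operator by which `d_n` acts on `Ω(λ, b) = ℂ[∂]`:
`f(∂) ↦ λ^n (∂ + n(b-1)) f(∂ - n)`. The central element acts by `0`. -/
noncomputable def omegaD (lam b : ℂ) (n : ℤ) : Module.End ℂ (Polynomial ℂ) where
  toFun f := lam ^ n • ((X + Polynomial.C ((n : ℂ) * (b - 1))) * f.comp (X - Polynomial.C (n : ℂ)))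
  map_add' f g := by simp [add_comp, mul_add, smul_add]
  map_smul' a f := by
    simp only [RingHom.id_apply, smul_comp, mul_smul_comm]
    rw [smul_comm]

/-- The diagonal action of `d_i` on a tensor product of two Virasoro modules. -/
noncomputable def tensorD {V W : Type*} [AddCommGroup V] [Module ℂ V] [AddCommGroup W]
    [Module ℂ W] (dV : ℤ → Module.End ℂ V) (dW : ℤ → Module.End ℂ W) (i : ℤ) :
    Module.End ℂ (V ⊗[ℂ] W) :=
  LinearMap.rTensor W (dV i) + LinearMap.lTensor V (dW i)

/-- The diagonal action of the central element on a tensor product of two Virasoro modules. -/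
noncomputable def tensorC {V W : Type*} [AddCommGroup V] [Module ℂ V] [AddCommGroup W]
    [Module ℂ W] (cV : Module.End ℂ V) (cW : Module.End ℂ W) : Module.End ℂ (V ⊗[ℂ] W) :=
  LinearMap.rTensor W cV + LinearMap.lTensor V cW


noncomputable def cf {V : Type*} [AddCommGroup V] [Module ℂ V] (n : ℕ) :
    (Polynomial ℂ ⊗[ℂ] V) →ₗ[ℂ] V :=
  (TensorProduct.lid ℂ V).toLinearMap ∘ₗ LinearMap.rTensor V (Polynomial.lcoeff ℂ n)

lemma cf_tmul {V : Type*} [AddCommGroup V] [Module ℂ V] (n : ℕ) (f : Polynomial ℂ) (v : V) :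
    cf n (f ⊗ₜ[ℂ] v) = f.coeff n • v := by
  simp [cf, lcoeff_apply]

lemma expand {V : Type*} [AddCommGroup V] [Module ℂ V] (w : Polynomial ℂ ⊗[ℂ] V) :
    ∃ N : ℕ, (∀ k, N ≤ k → cf k w = 0) ∧
      w = ∑ k ∈ Finset.range N, ((X : Polynomial ℂ) ^ k) ⊗ₜ[ℂ] (cf k w) := by
  induction w using TensorProduct.induction_on with
  | zero => exact ⟨0, by simp, by simp⟩
  | tmul f v =>
    refine ⟨f.natDegree + 1, ?_, ?_⟩
    · intro k hk
      rw [cf_tmul, Polynomial.coeff_eq_zero_of_natDegree_lt (by omega), zero_smul]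
    · conv_lhs => rw [f.as_sum_range' (f.natDegree + 1) (by omega)]
      rw [TensorProduct.sum_tmul]
      refine Finset.sum_congr rfl fun k _ => ?_
      rw [cf_tmul, ← Polynomial.smul_X_eq_monomial, TensorProduct.smul_tmul]
  | add w₁ w₂ h₁ h₂ =>
    obtain ⟨N₁, hv₁, he₁⟩ := h₁
    obtain ⟨N₂, hv₂, he₂⟩ := h₂
    refine ⟨max N₁ N₂, ?_, ?_⟩
    · intro k hk
      rw [map_add, hv₁ k (le_trans (le_max_left _ _) hk),
        hv₂ k (le_trans (le_max_right _ _) hk), add_zero]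
    · have e₁ : w₁ = ∑ k ∈ Finset.range (max N₁ N₂), ((X : Polynomial ℂ) ^ k) ⊗ₜ[ℂ] (cf k w₁) := by
        nth_rewrite 1 [he₁]
        refine Finset.sum_subset (Finset.range_subset_range.2 (le_max_left _ _)) ?_
        intro k _ hk
        rw [hv₁ k (by simpa using hk), TensorProduct.tmul_zero]
      have e₂ : w₂ = ∑ k ∈ Finset.range (max N₁ N₂), ((X : Polynomial ℂ) ^ k) ⊗ₜ[ℂ] (cf k w₂) := by
        nth_rewrite 1 [he₂]
        refine Finset.sum_subset (Finset.range_subset_range.2 (le_max_right _ _)) ?_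
        intro k _ hk
        rw [hv₂ k (by simpa using hk), TensorProduct.tmul_zero]
      conv_lhs => rw [e₁, e₂]
      rw [← Finset.sum_add_distrib]
      refine Finset.sum_congr rfl fun k _ => ?_
      rw [map_add, TensorProduct.tmul_add]

/-- vanishing of a vector-valued polynomial at all large integers. -/
lemma polyZ {V : Type*} [AddCommGroup V] [Module ℂ V] (N : ℕ) (u : ℕ → V) (K : ℤ)
    (h : ∀ l : ℤ, K ≤ l → ∑ i ∈ Finset.range N, ((l : ℂ) ^ i) • u i = 0) :
    ∀ i, i < N → u i = 0 := by
  intro i hi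
  rw [← Module.forall_dual_apply_eq_zero_iff ℂ]
  intro φ
  set p : Polynomial ℂ := ∑ i ∈ Finset.range N, Polynomial.C (φ (u i)) * X ^ i with hp
  have hroots : p = 0 := by
    apply Polynomial.eq_zero_of_infinite_isRoot
    apply Set.Infinite.mono (s := (fun l : ℤ => (l : ℂ)) '' Set.Ici K)
    · rintro x ⟨l, hl, rfl⟩
      have := h l hl
      simp only [Polynomial.IsRoot, hp, Polynomial.eval_finset_sum, Polynomial.eval_mul,
        Polynomial.eval_C, Polynomial.eval_pow, Polynomial.eval_X, Set.mem_setOf_eq]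
      calc ∑ i ∈ Finset.range N, φ (u i) * (l:ℂ) ^ i
          = φ (∑ i ∈ Finset.range N, ((l : ℂ) ^ i) • u i) := by
            rw [map_sum]; exact Finset.sum_congr rfl fun i _ => by rw [map_smul, smul_eq_mul, mul_comm]
        _ = 0 := by rw [this, map_zero]
    · exact Set.Infinite.image (fun a _ b _ h => Int.cast_injective h) (Set.Ici_infinite K)
  have : p.coeff i = φ (u i) := by
    rw [hp, Polynomial.finset_sum_coeff]
    rw [Finset.sum_eq_single i]
    · simp
    · intro j _ hj
      rw [Polynomial.coeff_C_mul, Polynomial.coeff_X_pow, if_neg (Ne.symm hj), mul_zero]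
    · intro hmem; exact absurd (Finset.mem_range.2 hi) hmem
  rw [← this, hroots, Polynomial.coeff_zero]

section Action


variable {V : Type*} [AddCommGroup V] [Module ℂ V]

lemma omegaD_apply (lam b : ℂ) (n : ℤ) (f : Polynomial ℂ) :
    omegaD lam b n f = lam ^ n • ((X + C ((n:ℂ) * (b - 1))) * f.comp (X - C (n:ℂ))) := rfl

lemma tensorD_tmul (dV : ℤ → Module.End ℂ V) (lam b : ℂ) (l : ℤ) (f : Polynomial ℂ) (v : V) :
    tensorD (omegaD lam b) dV l (f ⊗ₜ[ℂ] v) = (omegaD lam b l f) ⊗ₜ[ℂ] v + f ⊗ₜ[ℂ] (dV l v) := by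
  simp [tensorD]

lemma tensorD_pow_tmul (dV : ℤ → Module.End ℂ V) (lam b : ℂ) (l : ℤ) (k : ℕ) (v : V)
    (h : dV l v = 0) :
    tensorD (omegaD lam b) dV l (((X : Polynomial ℂ) ^ k) ⊗ₜ[ℂ] v)
      = lam ^ l • ((((X + C ((l:ℂ) * (b - 1))) * (X - C (l:ℂ)) ^ k)) ⊗ₜ[ℂ] v) := by
  rw [tensorD_tmul, h, TensorProduct.tmul_zero, add_zero, omegaD_apply, X_pow_comp,
    TensorProduct.smul_tmul']

lemma tensorD_one_tmul (dV : ℤ → Module.End ℂ V) (lam b : ℂ) (l : ℤ) (v : V)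
    (h : dV l v = 0) :
    tensorD (omegaD lam b) dV l ((1 : Polynomial ℂ) ⊗ₜ[ℂ] v)
      = lam ^ l • (((X : Polynomial ℂ) ⊗ₜ[ℂ] v) + (l:ℂ) • ((b - 1) • ((1 : Polynomial ℂ) ⊗ₜ[ℂ] v))) := by
  rw [tensorD_tmul, h, TensorProduct.tmul_zero, add_zero, omegaD_apply, one_comp, mul_one]
  have h2 : (C ((l:ℂ) * (b - 1)) : Polynomial ℂ) ⊗ₜ[ℂ] v
      = (l:ℂ) • ((b - 1) • ((1 : Polynomial ℂ) ⊗ₜ[ℂ] v)) := by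
    rw [← mul_smul, TensorProduct.smul_tmul', Polynomial.smul_eq_C_mul, mul_one]
  conv_lhs => rw [← TensorProduct.smul_tmul', TensorProduct.add_tmul, h2]

lemma cf_zero_poly (b : ℂ) (l : ℤ) (k : ℕ) (v : V) :
    cf 0 ((((X : Polynomial ℂ) + C ((l:ℂ) * (b - 1))) * (X - C (l:ℂ)) ^ k) ⊗ₜ[ℂ] v)
      = ((b - 1) * (-1) ^ k * (l:ℂ) ^ (k + 1)) • v := by
  rw [cf_tmul]
  congr 1
  rw [Polynomial.coeff_zero_eq_eval_zero]
  simp only [eval_mul, eval_add, eval_X, eval_C, eval_pow, eval_sub, zero_add, zero_sub]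
  ring

end Action

section Key

variable {V : Type*} [AddCommGroup V] [Module ℂ V]

lemma exists_bound (d : ℤ → Module.End ℂ V)
    (hnil : ∀ v : V, ∃ K : ℤ, ∀ l : ℤ, K ≤ l → d l v = 0) (v : ℕ → V) (K : ℤ) (N : ℕ) :
    ∃ K₁ : ℤ, K ≤ K₁ ∧ ∀ k, k < N → ∀ l : ℤ, K₁ ≤ l → d l (v k) = 0 := by
  induction N with
  | zero => exact ⟨K, le_refl _, fun k hk => absurd hk (Nat.not_lt_zero k)⟩
  | succ n ih =>
    obtain ⟨K₁, hK₁, h₁⟩ := ih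
    obtain ⟨K₂, h₂⟩ := hnil (v n)
    refine ⟨max K₁ K₂, le_trans hK₁ (le_max_left _ _), ?_⟩
    intro k hk l hl
    rcases Nat.lt_succ_iff_lt_or_eq.mp hk with h | rfl
    · exact h₁ k h l (le_trans (le_max_left _ _) hl)
    · exact h₂ l (le_trans (le_max_right _ _) hl)

lemma polyZ' (N : ℕ) (u : ℕ → V) (a c : V) (K : ℤ)
    (h : ∀ l : ℤ, K ≤ l → ∑ k ∈ Finset.range N, ((l : ℂ) ^ (k + 1)) • u k = a + (l : ℂ) • c) :
    ∀ k, 1 ≤ k → k < N → u k = 0 := by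
  set u' : ℕ → V := fun i =>
    (if 1 ≤ i ∧ i ≤ N then u (i - 1) else 0) + (if i = 0 then -a else 0) +
      (if i = 1 then -c else 0) with hu'
  have key : ∀ i, i < N + 2 → u' i = 0 := by
    apply polyZ (N + 2) u' K
    intro l hl
    have hsplit : ∀ i ∈ Finset.range (N + 2), ((l : ℂ) ^ i) • u' i =
        ((l : ℂ) ^ i) • (if 1 ≤ i ∧ i ≤ N then u (i - 1) else 0)
          + (((l : ℂ) ^ i) • (if i = 0 then -a else 0)
          + ((l : ℂ) ^ i) • (if i = 1 then -c else 0)) := by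
      intro i _
      rw [hu', smul_add, smul_add, add_assoc]
    rw [Finset.sum_congr rfl hsplit, Finset.sum_add_distrib, Finset.sum_add_distrib]
    have hB : ∑ i ∈ Finset.range (N + 2), ((l : ℂ) ^ i) • (if i = 0 then -a else (0:V)) = -a := by
      rw [Finset.sum_eq_single 0]
      · simp
      · intro j _ hj; rw [if_neg hj, smul_zero]
      · intro hmem; exact absurd (Finset.mem_range.2 (by omega)) hmem
    have hC : ∑ i ∈ Finset.range (N + 2), ((l : ℂ) ^ i) • (if i = 1 then -c else (0:V))
        = (l : ℂ) • -c := by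
      rw [Finset.sum_eq_single 1]
      · simp
      · intro j _ hj; rw [if_neg hj, smul_zero]
      · intro hmem; exact absurd (Finset.mem_range.2 (by omega)) hmem
    have hA : ∑ i ∈ Finset.range (N + 2),
        ((l : ℂ) ^ i) • (if 1 ≤ i ∧ i ≤ N then u (i - 1) else (0:V))
        = ∑ k ∈ Finset.range N, ((l : ℂ) ^ (k + 1)) • u k := by
      rw [Finset.sum_range_succ' (fun i => ((l : ℂ) ^ i) • (if 1 ≤ i ∧ i ≤ N then u (i - 1) else (0:V))) (N + 1)]
      have : (if 1 ≤ 0 ∧ 0 ≤ N then u (0 - 1) else (0:V)) = 0 := by simp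
      rw [this, smul_zero, add_zero]
      rw [← Finset.sum_subset (Finset.range_subset_range.2 (by omega : N ≤ N + 1))]
      · refine Finset.sum_congr rfl fun k hk => ?_
        have hk' := Finset.mem_range.1 hk
        rw [if_pos ⟨by omega, by omega⟩]
        simp
      · intro k _ hk
        have : ¬ (1 ≤ k + 1 ∧ k + 1 ≤ N) := by
          simp only [Finset.mem_range, not_lt] at hk; omega
        rw [if_neg this, smul_zero]
    rw [hA, hB, hC, h l hl, smul_neg]
    abel
  intro k hk1 hkN
  have := key (k + 1) (by omega)
  rw [hu'] at this
  simp only [show 1 ≤ k + 1 ∧ k + 1 ≤ N from ⟨by omega, by omega⟩, if_pos,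
    show ¬ (k + 1 = 0) from by omega, show ¬ (k + 1 = 1) from by omega, if_neg,
    not_false_iff, add_zero, Nat.add_sub_cancel] at this
  simpa using this

end Key

section KeyA

variable {V : Type*} [AddCommGroup V] [Module ℂ V]

/-- If `D_l w = λ^l (a + l c)` for all large `l`, then `w` is in `1 ⊗ V`. -/
lemma keyA (lam b : ℂ) (hlam : lam ≠ 0) (hb : b ≠ 1) (d : ℤ → Module.End ℂ V)
    (hnil : ∀ v : V, ∃ K : ℤ, ∀ l : ℤ, K ≤ l → d l v = 0)
    (w a c : Polynomial ℂ ⊗[ℂ] V) (K : ℤ)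
    (h : ∀ l : ℤ, K ≤ l → tensorD (omegaD lam b) d l w = lam ^ l • (a + (l : ℂ) • c)) :
    w = (1 : Polynomial ℂ) ⊗ₜ[ℂ] (cf 0 w) := by
  obtain ⟨N, hvan, hw⟩ := expand w
  obtain ⟨K₁, hKK, hkill⟩ := exists_bound d hnil (fun k => cf k w) K N
  have hbne : b - 1 ≠ 0 := sub_ne_zero.2 hb
  -- the key polynomial identity, from applying `cf 0`
  have hDl : ∀ l : ℤ, K₁ ≤ l →
      ∑ k ∈ Finset.range N, ((l : ℂ) ^ (k + 1)) • (((b - 1) * (-1) ^ k) • cf k w)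
        = cf 0 a + (l : ℂ) • cf 0 c := by
    intro l hl
    have hact : tensorD (omegaD lam b) d l w
        = ∑ k ∈ Finset.range N,
            lam ^ l • ((((X + C ((l:ℂ) * (b - 1))) * (X - C (l:ℂ)) ^ k)) ⊗ₜ[ℂ] cf k w) := by
      conv_lhs => rw [hw]
      rw [map_sum]
      exact Finset.sum_congr rfl fun k hk =>
        tensorD_pow_tmul d lam b l k (cf k w) (hkill k (Finset.mem_range.1 hk) l hl)
    have h1 := congrArg (cf 0) ((hact.symm).trans (h l (hKK.trans hl)))
    rw [map_sum, map_smul, map_add, map_smul] at h1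
    have h2 : ∑ k ∈ Finset.range N,
        cf 0 (lam ^ l • ((((X + C ((l:ℂ) * (b - 1))) * (X - C (l:ℂ)) ^ k)) ⊗ₜ[ℂ] cf k w))
        = lam ^ l • ∑ k ∈ Finset.range N,
            ((l : ℂ) ^ (k + 1)) • (((b - 1) * (-1) ^ k) • cf k w) := by
      rw [Finset.smul_sum]
      refine Finset.sum_congr rfl fun k _ => ?_
      rw [map_smul, cf_zero_poly]
      rw [smul_smul, smul_smul, smul_smul]
      ring_nf
    rw [h2] at h1
    have hlz : lam ^ l ≠ 0 := zpow_ne_zero l hlam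
    have := congrArg (fun z => (lam ^ l)⁻¹ • z) h1
    simpa [inv_smul_smul₀ hlz] using this
  have hzero : ∀ k, 1 ≤ k → k < N → ((b - 1) * (-1) ^ k) • cf k w = 0 :=
    polyZ' N (fun k => ((b - 1) * (-1) ^ k) • cf k w) (cf 0 a) (cf 0 c) K₁ hDl
  have hvk : ∀ k, 1 ≤ k → cf k w = 0 := by
    intro k hk
    by_cases hkN : k < N
    · have := hzero k hk hkN
      rcases smul_eq_zero.1 this with h0 | h0
      · exact absurd h0 (mul_ne_zero hbne (pow_ne_zero k (neg_ne_zero.2 one_ne_zero)))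
      · exact h0
    · exact hvan k (by omega)
  rcases Nat.eq_zero_or_pos N with hN | hN
  · rw [hvan 0 (by omega), TensorProduct.tmul_zero]
    rw [hw, hN, Finset.range_zero, Finset.sum_empty]
  · conv_lhs => rw [hw]
    rw [Finset.sum_eq_single 0]
    · rw [pow_zero]
    · intro j _ hj
      rw [hvk j (by omega), TensorProduct.tmul_zero]
    · intro hmem; exact absurd (Finset.mem_range.2 hN) hmem

end KeyA

lemma mu_eq_one (μ : ℂ) (hμ : μ ≠ 0) (p q : Polynomial ℂ) (hq : q ≠ 0) (K : ℤ)
    (h : ∀ l : ℤ, K ≤ l → μ ^ l * q.eval (l : ℂ) = p.eval (l : ℂ)) : μ = 1 := by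
  have evals : ∀ r : Polynomial ℂ, (∀ l : ℤ, K ≤ l → r.eval (l : ℂ) = 0) → r = 0 := by
    intro r hr
    apply Polynomial.eq_zero_of_infinite_isRoot
    apply Set.Infinite.mono (s := (fun l : ℤ => (l : ℂ)) '' Set.Ici K)
    · rintro x ⟨l, hl, rfl⟩
      exact hr l hl
    · exact Set.Infinite.image (fun a _ b _ h => Int.cast_injective h) (Set.Ici_infinite K)
  have hp : p ≠ 0 := by
    intro h0
    apply hq
    apply evals
    intro l hl
    have := h l hl
    rw [h0, Polynomial.eval_zero] at this
    exact (mul_eq_zero.1 this).resolve_left (zpow_ne_zero l hμ)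
  have hpoly : p.comp (X + 1) * q = μ • (q.comp (X + 1) * p) := by
    rw [← sub_eq_zero]
    apply evals
    intro l hl
    have e1 := h l hl
    have e2 := h (l + 1) (by omega)
    have cast1 : ((l + 1 : ℤ) : ℂ) = (l : ℂ) + 1 := by push_cast; ring
    rw [cast1] at e2
    simp only [Polynomial.eval_sub, Polynomial.eval_mul, Polynomial.eval_smul,
      Polynomial.eval_comp, Polynomial.eval_add, Polynomial.eval_X, Polynomial.eval_one,
      smul_eq_mul]
    rw [← e1, ← e2, zpow_add_one₀ hμ]
    ring
  have hlead := congrArg Polynomial.leadingCoeff hpoly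
  have hX1 : ((X : Polynomial ℂ) + 1).natDegree ≠ 0 := by
    rw [show ((X : Polynomial ℂ) + 1) = X + C 1 by simp, Polynomial.natDegree_X_add_C]
    omega
  have hX1lead : ((X : Polynomial ℂ) + 1).leadingCoeff = 1 := by
    rw [show ((X : Polynomial ℂ) + 1) = X + C 1 by simp]
    exact (Polynomial.monic_X_add_C 1).leadingCoeff
  rw [Polynomial.leadingCoeff_mul, Polynomial.leadingCoeff_comp hX1, hX1lead, one_pow, mul_one,
    Polynomial.smul_eq_C_mul, Polynomial.leadingCoeff_mul, Polynomial.leadingCoeff_C,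
    Polynomial.leadingCoeff_mul, Polynomial.leadingCoeff_comp hX1, hX1lead, one_pow,
    mul_one] at hlead
  have hpl : p.leadingCoeff ≠ 0 := Polynomial.leadingCoeff_ne_zero.2 hp
  have hql : q.leadingCoeff ≠ 0 := Polynomial.leadingCoeff_ne_zero.2 hq
  have : p.leadingCoeff * q.leadingCoeff = μ * (q.leadingCoeff * p.leadingCoeff) := hlead
  have h2 : μ * (q.leadingCoeff * p.leadingCoeff) = 1 * (q.leadingCoeff * p.leadingCoeff) := by
    rw [one_mul, ← this]; ring
  exact mul_right_cancel₀ (mul_ne_zero hql hpl) h2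

section Glue

variable {V : Type*} [AddCommGroup V] [Module ℂ V]

lemma smul_cancel {M : Type*} [AddCommGroup M] [Module ℂ M] {a : ℂ} (ha : a ≠ 0) {x y : M}
    (h : a • x = a • y) : x = y := by
  have := congrArg (fun z => a⁻¹ • z) h
  simpa [inv_smul_smul₀ ha] using this

lemma cf0_one (x : V) : cf 0 ((1 : Polynomial ℂ) ⊗ₜ[ℂ] x) = x := by
  rw [cf_tmul]; simp

lemma exists_dual (x : V) (hx : x ≠ 0) : ∃ φ : Module.Dual ℂ V, φ x ≠ 0 := by
  by_contra h
  push_neg at h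
  exact hx ((Module.forall_dual_apply_eq_zero_iff ℂ x).1 fun φ => h φ)

lemma tensorD_one_tmul' (dV : ℤ → Module.End ℂ V) (lam b : ℂ) (l : ℤ) (v : V) :
    tensorD (omegaD lam b) dV l ((1 : Polynomial ℂ) ⊗ₜ[ℂ] v)
      = lam ^ l • (((X : Polynomial ℂ) ⊗ₜ[ℂ] v)
          + (l:ℂ) • ((b - 1) • ((1 : Polynomial ℂ) ⊗ₜ[ℂ] v))) + (1 : Polynomial ℂ) ⊗ₜ[ℂ] (dV l v) := by
  rw [tensorD_tmul, omegaD_apply, one_comp, mul_one]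
  congr 1
  have h2 : (C ((l:ℂ) * (b - 1)) : Polynomial ℂ) ⊗ₜ[ℂ] v
      = (l:ℂ) • ((b - 1) • ((1 : Polynomial ℂ) ⊗ₜ[ℂ] v)) := by
    rw [← mul_smul, TensorProduct.smul_tmul', Polynomial.smul_eq_C_mul, mul_one]
  conv_lhs => rw [← TensorProduct.smul_tmul', TensorProduct.add_tmul, h2]

lemma tensorC_tmul (cW : Module.End ℂ V) (f : Polynomial ℂ) (v : V) :
    tensorC 0 cW (f ⊗ₜ[ℂ] v) = f ⊗ₜ[ℂ] (cW v) := by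
  simp [tensorC]

lemma act_expand (lam b : ℂ) (d : ℤ → Module.End ℂ V) (w : Polynomial ℂ ⊗[ℂ] V) (N : ℕ)
    (hw : w = ∑ k ∈ Finset.range N, ((X : Polynomial ℂ) ^ k) ⊗ₜ[ℂ] (cf k w)) (l : ℤ)
    (hkill : ∀ k, k < N → d l (cf k w) = 0) :
    cf 0 (tensorD (omegaD lam b) d l w)
      = lam ^ l • ∑ k ∈ Finset.range N, (((b - 1) * (-1) ^ k * (l:ℂ) ^ (k + 1))) • cf k w := by
  conv_lhs => rw [hw]
  rw [map_sum, map_sum, Finset.smul_sum]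
  refine Finset.sum_congr rfl fun k hk => ?_
  rw [tensorD_pow_tmul d lam b l k (cf k w) (hkill k (Finset.mem_range.1 hk)), map_smul,
    cf_zero_poly]

end Glue

section LamEq

variable {V V' : Type*} [AddCommGroup V] [Module ℂ V] [AddCommGroup V'] [Module ℂ V']

lemma lam_eq [Nontrivial V]
    (lam lam' b b' : ℂ) (hlam : lam ≠ 0) (hlam' : lam' ≠ 0) (hb : b ≠ 1) (hb' : b' ≠ 1)
    (d : ℤ → Module.End ℂ V)
    (hnil : ∀ v : V, ∃ K : ℤ, ∀ l : ℤ, K ≤ l → d l v = 0)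
    (d' : ℤ → Module.End ℂ V')
    (hnil' : ∀ v : V', ∃ K : ℤ, ∀ l : ℤ, K ≤ l → d' l v = 0)
    (e : (Polynomial ℂ ⊗[ℂ] V) ≃ₗ[ℂ] (Polynomial ℂ ⊗[ℂ] V'))
    (he_d : ∀ (i : ℤ) (w : Polynomial ℂ ⊗[ℂ] V),
      e (tensorD (omegaD lam b) d i w) = tensorD (omegaD lam' b') d' i (e w)) :
    lam = lam' := by
  obtain ⟨v, hv⟩ := exists_ne (0 : V)
  set w : Polynomial ℂ ⊗[ℂ] V := (1 : Polynomial ℂ) ⊗ₜ[ℂ] v with hwdef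
  have hw0 : w ≠ 0 := fun h => hv (by rw [← cf0_one v, ← hwdef, h, map_zero])
  have hew0 : e w ≠ 0 := fun h => hw0 (by simpa using (LinearEquiv.map_eq_zero_iff e).1 h)
  obtain ⟨N', hvan', hw'⟩ := expand (e w)
  have hex : ∃ k0, cf k0 (e w) ≠ 0 := by
    by_contra h
    push_neg at h
    apply hew0
    rw [hw']
    exact Finset.sum_eq_zero fun k _ => by rw [h k, TensorProduct.tmul_zero]
  obtain ⟨k0, hk0⟩ := hex
  have hk0N : k0 < N' := by
    by_contra h
    exact hk0 (hvan' k0 (by omega))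
  obtain ⟨φ, hφ⟩ := exists_dual _ hk0
  obtain ⟨K₀, hK₀⟩ := hnil v
  obtain ⟨K₁, hKK, hkill'⟩ := exists_bound d' hnil' (fun k => cf k (e w)) K₀ N'
  set α := φ (cf 0 (e ((X : Polynomial ℂ) ⊗ₜ[ℂ] v))) with hα
  set β := (b - 1) * φ (cf 0 (e w)) with hβ
  set p : Polynomial ℂ := C α + C β * X with hp
  set q : Polynomial ℂ :=
    ∑ k ∈ Finset.range N', C ((b' - 1) * (-1) ^ k * φ (cf k (e w))) * X ^ (k + 1) with hqdef
  have hq : q ≠ 0 := by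
    intro h0
    have hc : q.coeff (k0 + 1) = (b' - 1) * (-1) ^ k0 * φ (cf k0 (e w)) := by
      rw [hqdef, Polynomial.finset_sum_coeff, Finset.sum_eq_single k0]
      · rw [Polynomial.coeff_C_mul, Polynomial.coeff_X_pow, if_pos rfl, mul_one]
      · intro j _ hj
        rw [Polynomial.coeff_C_mul, Polynomial.coeff_X_pow, if_neg (by omega), mul_zero]
      · intro hmem
        exact absurd (Finset.mem_range.2 hk0N) hmem
    rw [h0, Polynomial.coeff_zero] at hc
    exact mul_ne_zero (mul_ne_zero (sub_ne_zero.2 hb') (pow_ne_zero _ (neg_ne_zero.2 one_ne_zero)))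
      hφ hc.symm
  have key : ∀ l : ℤ, K₁ ≤ l → (lam' / lam) ^ l * q.eval (l : ℂ) = p.eval (l : ℂ) := by
    intro l hl
    have h1 := congrArg (fun z => φ (cf 0 z)) (he_d l w)
    have hL : φ (cf 0 (e (tensorD (omegaD lam b) d l w))) = lam ^ l * (α + (l : ℂ) * β) := by
      rw [hwdef, tensorD_one_tmul d lam b l v (hK₀ l (hKK.trans hl))]
      simp only [map_smul, map_add, smul_eq_mul, ← hwdef]
      try rw [hα]
      try rw [hβ]
      try ring
    have hR : φ (cf 0 (tensorD (omegaD lam' b') d' l (e w))) = lam' ^ l * q.eval (l : ℂ) := by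
      rw [act_expand lam' b' d' (e w) N' hw' l (fun k hk => hkill' k hk l hl)]
      rw [map_smul, map_sum, smul_eq_mul, hqdef, Polynomial.eval_finset_sum]
      congr 1
      refine Finset.sum_congr rfl fun k _ => ?_
      rw [map_smul, smul_eq_mul]
      simp only [Polynomial.eval_mul, Polynomial.eval_C, Polynomial.eval_pow, Polynomial.eval_X]
      ring
    have h2 : lam ^ l * (α + (l : ℂ) * β) = lam' ^ l * q.eval (l : ℂ) := by
      rw [← hL, ← hR]
      exact h1
    have hpe : p.eval (l : ℂ) = α + (l : ℂ) * β := by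
      rw [hp]
      simp only [Polynomial.eval_add, Polynomial.eval_mul, Polynomial.eval_C, Polynomial.eval_X]
      ring
    rw [hpe, div_zpow, div_mul_eq_mul_div, ← h2, mul_div_cancel_left₀ _ (zpow_ne_zero l hlam)]
  have := mu_eq_one (lam' / lam) (div_ne_zero hlam' hlam) p q hq K₁ key
  exact ((div_eq_one_iff_eq hlam).1 this).symm
end LamEq

/-- if `Ω(λ,b) ⊗ V` and `Ω(λ',b') ⊗ V'` are isomorphic as Virasoro modules
then `λ = λ'`, `b = b'` and `V ≅ V'` as Virasoro modules. -/
theorem tensor_iso_classification {V V' : Type*}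
    [AddCommGroup V] [Module ℂ V] [Nontrivial V]
    [AddCommGroup V'] [Module ℂ V'] [Nontrivial V']
    (lam lam' b b' : ℂ) (hlam : lam ≠ 0) (hlam' : lam' ≠ 0) (hb : b ≠ 1) (hb' : b' ≠ 1)
    (d : ℤ → Module.End ℂ V) (cV : Module.End ℂ V) (hrep : VirRep d cV)
    (hirr : ∀ p : Submodule ℂ V, VirInvariant d cV p → p = ⊥ ∨ p = ⊤)
    (hnil : ∀ v : V, ∃ K : ℤ, ∀ l : ℤ, K ≤ l → d l v = 0)
    (d' : ℤ → Module.End ℂ V') (cV' : Module.End ℂ V') (hrep' : VirRep d' cV')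
    (hirr' : ∀ p : Submodule ℂ V', VirInvariant d' cV' p → p = ⊥ ∨ p = ⊤)
    (hnil' : ∀ v : V', ∃ K : ℤ, ∀ l : ℤ, K ≤ l → d' l v = 0)
    (e : (Polynomial ℂ ⊗[ℂ] V) ≃ₗ[ℂ] (Polynomial ℂ ⊗[ℂ] V'))
    (he_d : ∀ (i : ℤ) (w : Polynomial ℂ ⊗[ℂ] V),
      e (tensorD (omegaD lam b) d i w) = tensorD (omegaD lam' b') d' i (e w))
    (he_c : ∀ w : Polynomial ℂ ⊗[ℂ] V, e (tensorC 0 cV w) = tensorC 0 cV' (e w)) :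
    lam = lam' ∧ b = b' ∧
      ∃ τ : V ≃ₗ[ℂ] V',
        (∀ (j : ℤ) (v : V), τ (d j v) = d' j (τ v)) ∧ ∀ v : V, τ (cV v) = cV' (τ v) := by
  have hll : lam = lam' := lam_eq lam lam' b b' hlam hlam' hb hb' d hnil d' hnil' e he_d
  subst hll
  -- the inverse also intertwines
  have hsymm_d : ∀ (i : ℤ) (u : Polynomial ℂ ⊗[ℂ] V'),
      e.symm (tensorD (omegaD lam b') d' i u) = tensorD (omegaD lam b) d i (e.symm u) := by
    intro i u
    apply e.injective
    rw [he_d, e.apply_symm_apply, e.apply_symm_apply]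
  -- `e` and `e.symm` map `1 ⊗ V` into `1 ⊗ V'` and back
  have e_one : ∀ v : V, e ((1 : Polynomial ℂ) ⊗ₜ[ℂ] v)
      = (1 : Polynomial ℂ) ⊗ₜ[ℂ] (cf 0 (e ((1 : Polynomial ℂ) ⊗ₜ[ℂ] v))) := by
    intro v
    obtain ⟨K₀, hK₀⟩ := hnil v
    apply keyA lam b' hlam hb' d' hnil' _ (e ((X : Polynomial ℂ) ⊗ₜ[ℂ] v))
      ((b - 1) • e ((1 : Polynomial ℂ) ⊗ₜ[ℂ] v)) K₀
    intro l hl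
    rw [← he_d, tensorD_one_tmul d lam b l v (hK₀ l hl)]
    simp only [map_smul, map_add]
  have e_symm_one : ∀ v' : V', e.symm ((1 : Polynomial ℂ) ⊗ₜ[ℂ] v')
      = (1 : Polynomial ℂ) ⊗ₜ[ℂ] (cf 0 (e.symm ((1 : Polynomial ℂ) ⊗ₜ[ℂ] v'))) := by
    intro v'
    obtain ⟨K₀, hK₀⟩ := hnil' v'
    apply keyA lam b hlam hb d hnil _ (e.symm ((X : Polynomial ℂ) ⊗ₜ[ℂ] v'))
      ((b' - 1) • e.symm ((1 : Polynomial ℂ) ⊗ₜ[ℂ] v')) K₀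
    intro l hl
    rw [← hsymm_d, tensorD_one_tmul d' lam b' l v' (hK₀ l hl)]
    simp only [map_smul, map_add]
  -- the candidate isomorphism and its inverse
  set τ₀ : V →ₗ[ℂ] V' :=
    cf 0 ∘ₗ (e.toLinearMap ∘ₗ TensorProduct.mk ℂ (Polynomial ℂ) V 1) with hτ₀
  set σ₀ : V' →ₗ[ℂ] V :=
    cf 0 ∘ₗ (e.symm.toLinearMap ∘ₗ TensorProduct.mk ℂ (Polynomial ℂ) V' 1) with hσ₀
  have hτ : ∀ v : V, e ((1 : Polynomial ℂ) ⊗ₜ[ℂ] v) = (1 : Polynomial ℂ) ⊗ₜ[ℂ] (τ₀ v) := by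
    intro v
    rw [e_one v]
    simp [hτ₀]
  have hσ : ∀ v' : V', e.symm ((1 : Polynomial ℂ) ⊗ₜ[ℂ] v')
      = (1 : Polynomial ℂ) ⊗ₜ[ℂ] (σ₀ v') := by
    intro v'
    rw [e_symm_one v']
    simp [hσ₀]
  have hst : ∀ v : V, σ₀ (τ₀ v) = v := by
    intro v
    have h0 : e.symm ((1 : Polynomial ℂ) ⊗ₜ[ℂ] (τ₀ v)) = (1 : Polynomial ℂ) ⊗ₜ[ℂ] v := by
      rw [← hτ, e.symm_apply_apply]
    have h2 := hσ (τ₀ v)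
    rw [h0] at h2
    have := congrArg (cf 0) h2
    simpa [cf0_one] using this.symm
  have hts : ∀ v' : V', τ₀ (σ₀ v') = v' := by
    intro v'
    have h0 : e ((1 : Polynomial ℂ) ⊗ₜ[ℂ] (σ₀ v')) = (1 : Polynomial ℂ) ⊗ₜ[ℂ] v' := by
      rw [← hσ, e.apply_symm_apply]
    have h2 := hτ (σ₀ v')
    rw [h0] at h2
    have := congrArg (cf 0) h2
    simpa [cf0_one] using this.symm
  -- b = b'
  have hbb : b = b' := by
    obtain ⟨v, hv⟩ := exists_ne (0 : V)
    have hτv : τ₀ v ≠ 0 := by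
      intro h0
      apply hv
      have h1 := hτ v
      rw [h0, TensorProduct.tmul_zero] at h1
      have h2 := (LinearEquiv.map_eq_zero_iff e).1 h1
      have := congrArg (cf 0) h2
      simpa [cf0_one] using this
    obtain ⟨φ, hφ⟩ := exists_dual _ hτv
    obtain ⟨K₀, hK₀⟩ := hnil v
    obtain ⟨K₁, hK₁⟩ := hnil' (τ₀ v)
    have scalar : ∀ l : ℤ, max K₀ K₁ ≤ l →
        φ (cf 0 (e ((X : Polynomial ℂ) ⊗ₜ[ℂ] v))) + (l : ℂ) * ((b - 1) * φ (τ₀ v))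
          = φ (cf 0 ((X : Polynomial ℂ) ⊗ₜ[ℂ] (τ₀ v))) + (l : ℂ) * ((b' - 1) * φ (τ₀ v)) := by
      intro l hl
      have h1 := he_d l ((1 : Polynomial ℂ) ⊗ₜ[ℂ] v)
      rw [tensorD_one_tmul d lam b l v (hK₀ l (le_trans (le_max_left _ _) hl)), hτ v,
        tensorD_one_tmul d' lam b' l (τ₀ v) (hK₁ l (le_trans (le_max_right _ _) hl))] at h1
      simp only [map_smul, map_add] at h1
      rw [hτ v] at h1
      have h2 : (e ((X : Polynomial ℂ) ⊗ₜ[ℂ] v)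
            + (l : ℂ) • ((b - 1) • ((1 : Polynomial ℂ) ⊗ₜ[ℂ] (τ₀ v))))
          = ((X : Polynomial ℂ) ⊗ₜ[ℂ] (τ₀ v)
            + (l : ℂ) • ((b' - 1) • ((1 : Polynomial ℂ) ⊗ₜ[ℂ] (τ₀ v)))) :=
        smul_cancel (zpow_ne_zero l hlam) h1
      have h3 := congrArg (fun z => φ (cf 0 z)) h2
      simpa [map_add, map_smul, smul_eq_mul, cf0_one, mul_assoc] using h3
    have h1 := scalar (max K₀ K₁) le_rfl
    have h2 := scalar (max K₀ K₁ + 1) (by omega)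
    push_cast at h2
    have h3 : (b - 1) * φ (τ₀ v) = (b' - 1) * φ (τ₀ v) := by linear_combination h2 - h1
    have h4 := mul_right_cancel₀ hφ h3
    linear_combination h4
  subst hbb
  -- e maps X ⊗ v to X ⊗ τ₀ v
  have eX : ∀ v : V, e ((X : Polynomial ℂ) ⊗ₜ[ℂ] v) = (X : Polynomial ℂ) ⊗ₜ[ℂ] (τ₀ v) := by
    intro v
    obtain ⟨K₀, hK₀⟩ := hnil v
    obtain ⟨K₁, hK₁⟩ := hnil' (τ₀ v)
    have h1 := he_d (max K₀ K₁) ((1 : Polynomial ℂ) ⊗ₜ[ℂ] v)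
    rw [tensorD_one_tmul d lam b (max K₀ K₁) v (hK₀ _ (le_max_left _ _)), hτ v,
      tensorD_one_tmul d' lam b (max K₀ K₁) (τ₀ v) (hK₁ _ (le_max_right _ _))] at h1
    simp only [map_smul, map_add] at h1
    rw [hτ v] at h1
    have h2 : (e ((X : Polynomial ℂ) ⊗ₜ[ℂ] v)
          + ((max K₀ K₁ : ℤ) : ℂ) • ((b - 1) • ((1 : Polynomial ℂ) ⊗ₜ[ℂ] (τ₀ v))))
        = ((X : Polynomial ℂ) ⊗ₜ[ℂ] (τ₀ v)
          + ((max K₀ K₁ : ℤ) : ℂ) • ((b - 1) • ((1 : Polynomial ℂ) ⊗ₜ[ℂ] (τ₀ v)))) :=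
      smul_cancel (zpow_ne_zero _ hlam) h1
    exact add_right_cancel h2
  -- the intertwining relations
  have hint : ∀ (j : ℤ) (v : V), τ₀ (d j v) = d' j (τ₀ v) := by
    intro j v
    have h1 := he_d j ((1 : Polynomial ℂ) ⊗ₜ[ℂ] v)
    rw [tensorD_one_tmul' d lam b j v, hτ v, tensorD_one_tmul' d' lam b j (τ₀ v)] at h1
    simp only [map_add, map_smul] at h1
    rw [hτ v, hτ (d j v), eX v] at h1
    have h2 := add_left_cancel h1
    have := congrArg (cf 0) h2
    simpa [cf0_one] using this
  have hcent : ∀ v : V, τ₀ (cV v) = cV' (τ₀ v) := by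
    intro v
    have h1 := he_c ((1 : Polynomial ℂ) ⊗ₜ[ℂ] v)
    rw [tensorC_tmul, hτ (cV v), hτ v, tensorC_tmul] at h1
    have := congrArg (cf 0) h1
    simpa [cf0_one] using this
  refine ⟨rfl, rfl, LinearEquiv.ofLinear τ₀ σ₀ (LinearMap.ext hts) (LinearMap.ext hst), ?_, ?_⟩
  · intro j v
    simpa [LinearEquiv.ofLinear_apply] using hint j v
  · intro v
    simpa [LinearEquiv.ofLinear_apply] using hcent v
end

section
/- Let λ ∈ ℂ*, b ∈ ℂ \ {1}, and let V be a Virasoro module which is either a highest weight module or the Whittaker module L_{ψ_n,θ}. Then every submodule M of Ω(λ,b) ⊗ V has the form Ω(λ,b) ⊗ X for some submodule X of V. -/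
open Polynomial TensorProduct

section AuxVir

lemma vand_mem {E : Type*} [AddCommGroup E] [Module ℂ E] (M : Submodule ℂ E)
    {n : ℕ} (c : Fin n → ℂ) (hc : Function.Injective c) (w : Fin n → E)
    (h : ∀ i, (∑ j : Fin n, c i ^ (j : ℕ) • w j) ∈ M) : ∀ j, w j ∈ M := by
  classical
  set A : Matrix (Fin n) (Fin n) ℂ := Matrix.vandermonde c with hA
  have hdet : IsUnit A.det := by
    rw [hA, Matrix.det_vandermonde]
    refine isUnit_iff_ne_zero.2 ?_
    refine Finset.prod_ne_zero_iff.2 fun i _ => Finset.prod_ne_zero_iff.2 fun j hj => ?_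
    have hij : i ≠ j := ne_of_lt (Finset.mem_Ioi.1 hj)
    exact sub_ne_zero.2 fun hcc => hij (hc hcc.symm)
  have hinv : A⁻¹ * A = 1 := Matrix.nonsing_inv_mul A hdet
  intro j
  have key : w j = ∑ i, A⁻¹ j i • ∑ k, A i k • w k := by
    have h1 : ∀ i, A⁻¹ j i • ∑ k, A i k • w k = ∑ k, (A⁻¹ j i * A i k) • w k := by
      intro i
      rw [Finset.smul_sum]
      simp [smul_smul]
    simp_rw [h1]
    rw [Finset.sum_comm]
    have h2 : ∀ k, ∑ i, (A⁻¹ j i * A i k) • w k = ((A⁻¹ * A) j k) • w k := by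
      intro k
      rw [← Finset.sum_smul, Matrix.mul_apply]
    simp_rw [h2, hinv]
    simp [Matrix.one_apply]
  rw [key]
  exact Submodule.sum_mem _ fun i _ => Submodule.smul_mem _ _ (h i)

lemma int_poly_mem {E : Type*} [AddCommGroup E] [Module ℂ E] (M : Submodule ℂ E)
    {n : ℕ} (w : Fin n → E) (K : ℤ)
    (h : ∀ l : ℤ, K ≤ l → (∑ j : Fin n, ((l : ℂ)) ^ (j : ℕ) • w j) ∈ M) : ∀ j, w j ∈ M := by
  refine vand_mem M (fun i => ((K + (i : ℕ) : ℤ) : ℂ)) ?_ w ?_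
  · intro i j hij
    simp only at hij
    have h1 : (K + (i : ℕ) : ℤ) = (K + (j : ℕ) : ℤ) := by exact_mod_cast hij
    have : (i : ℕ) = (j : ℕ) := by omega
    exact Fin.ext this
  · intro i
    exact h (K + (i : ℕ)) (by omega)

noncomputable def Qp (b : ℂ) (k : ℕ) : Polynomial (Polynomial ℂ) :=
  (C (X : ℂ[X]) + C (Polynomial.C (b-1)) * X) * (C (X : ℂ[X]) - X)^k

lemma Qp_eval (b l : ℂ) (k : ℕ) :
    (Qp b k).eval (C l) = ((X : ℂ[X]) + Polynomial.C ((l : ℂ)*(b-1))) * ((X : ℂ[X]) - Polynomial.C l)^k := by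
  simp only [Qp, eval_mul, eval_add, eval_pow, eval_sub, eval_C, eval_X]
  rw [← C_mul, mul_comm (b-1) l]

lemma Qp_natDegree (b : ℂ) (k : ℕ) : (Qp b k).natDegree ≤ k + 1 := by
  refine le_trans (natDegree_mul_le) ?_
  have h1 : (C (X : ℂ[X]) + C (Polynomial.C (b-1)) * X).natDegree ≤ 1 := by
    refine le_trans (natDegree_add_le _ _) ?_
    simp only [natDegree_C, max_le_iff]
    exact ⟨Nat.zero_le 1, le_trans (natDegree_C_mul_le _ _) natDegree_X_le⟩
  have h2 : ((C (X : ℂ[X]) - X)^k).natDegree ≤ k := by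
    refine le_trans (natDegree_pow_le) ?_
    have h : (C (X : ℂ[X]) - X).natDegree ≤ 1 := by
      refine le_trans (natDegree_sub_le _ _) ?_
      simp [natDegree_C, natDegree_X_le]
    calc k * (C (X : ℂ[X]) - X).natDegree ≤ k * 1 := Nat.mul_le_mul_left k h
    _ = k := Nat.mul_one k
  omega

lemma Qp_coeff_zero (b : ℂ) (k : ℕ) : (Qp b k).coeff 0 = (X : ℂ[X])^(k+1) := by
  rw [coeff_zero_eq_eval_zero]
  simp [Qp, pow_succ, mul_comm]

lemma Qp_coeff_top (b : ℂ) (N : ℕ) :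
    (Qp b N).coeff (N+1) = Polynomial.C ((b-1) * (-1)^N) := by
  have hB : (C (X : ℂ[X]) - X)^N = (-1)^N * (X - C (X : ℂ[X]))^N := by
    rw [← mul_pow]
    congr 1
    ring
  have hmonic : ((X : (ℂ[X])[X]) - C (X : ℂ[X]))^N |>.Monic := (monic_X_sub_C _).pow N
  have hdeg : (((X : (ℂ[X])[X]) - C (X : ℂ[X]))^N).natDegree = N := by
    rw [natDegree_pow, natDegree_X_sub_C, mul_one]
  have hC1 : ((-1 : (ℂ[X])[X]))^N = C ((-1 : ℂ[X])^N) := by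
    simp [map_pow]
  have hBN : ((C (X : ℂ[X]) - X)^N).coeff N = (-1 : ℂ[X])^N := by
    rw [hB, hC1, coeff_C_mul]
    have h := hmonic.coeff_natDegree
    rw [hdeg] at h
    rw [h, mul_one]
  have hB1 : ((C (X : ℂ[X]) - X)^N).coeff (N+1) = 0 := by
    apply coeff_eq_zero_of_natDegree_lt
    have h : ((C (X : ℂ[X]) - X)^N).natDegree ≤ N := by
      refine le_trans natDegree_pow_le ?_
      have h : (C (X : ℂ[X]) - X).natDegree ≤ 1 := by
        refine le_trans (natDegree_sub_le _ _) ?_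
        simp [natDegree_C, natDegree_X_le]
      calc N * (C (X : ℂ[X]) - X).natDegree ≤ N * 1 := Nat.mul_le_mul_left N h
      _ = N := Nat.mul_one N
    omega
  have expand : Qp b N = C (X : ℂ[X]) * (C (X : ℂ[X]) - X)^N
      + C (Polynomial.C (b-1)) * (X * (C (X : ℂ[X]) - X)^N) := by
    rw [Qp]; ring
  rw [expand, coeff_add, coeff_C_mul, coeff_C_mul, coeff_X_mul, hB1, hBN, mul_zero, zero_add]
  rw [map_mul]
  congr 1
  simp [map_pow]

variable {V : Type*} [AddCommGroup V] [Module ℂ V]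

lemma exists_repr (w : Polynomial ℂ ⊗[ℂ] V) :
    ∃ (N : ℕ) (u : ℕ → V), (∀ k, N < k → u k = 0) ∧
      w = ∑ k ∈ Finset.range (N+1), ((X : ℂ[X])^k) ⊗ₜ[ℂ] u k := by
  induction w using TensorProduct.induction_on with
  | zero => exact ⟨0, 0, fun k _ => rfl, by simp⟩
  | tmul f v =>
    refine ⟨f.natDegree, fun k => f.coeff k • v, fun k hk => by
      simp [coeff_eq_zero_of_natDegree_lt hk], ?_⟩
    conv_lhs => rw [f.as_sum_range' (f.natDegree+1) (lt_add_one _)]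
    rw [sum_tmul]
    refine Finset.sum_congr rfl fun k _ => ?_
    rw [show ((monomial k) (f.coeff k) : ℂ[X]) = f.coeff k • (X:ℂ[X])^k from by
      rw [smul_eq_C_mul, ← C_mul_X_pow_eq_monomial], smul_tmul]
  | add x y hx hy =>
    obtain ⟨N1, u1, h1, e1⟩ := hx
    obtain ⟨N2, u2, h2, e2⟩ := hy
    refine ⟨max N1 N2, u1 + u2, fun k hk => by
      simp [h1 k (lt_of_le_of_lt (le_max_left _ _) hk),
        h2 k (lt_of_le_of_lt (le_max_right _ _) hk)], ?_⟩
    have ext1 : ∀ (N' : ℕ) (u : ℕ → V), (∀ k, N' < k → u k = 0) → N' ≤ max N1 N2 →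
        ∑ k ∈ Finset.range (N'+1), ((X : ℂ[X])^k) ⊗ₜ[ℂ] u k
          = ∑ k ∈ Finset.range (max N1 N2 + 1), ((X : ℂ[X])^k) ⊗ₜ[ℂ] u k := by
      intro N' u hu hle
      refine Finset.sum_subset (Finset.range_subset_range.2 (by omega)) fun k _ hk => ?_
      rw [hu k (by simp at hk ⊢; omega), tmul_zero]
    rw [e1, e2, ext1 N1 u1 h1 (le_max_left _ _), ext1 N2 u2 h2 (le_max_right _ _),
      ← Finset.sum_add_distrib]
    refine Finset.sum_congr rfl fun k _ => ?_
    rw [← tmul_add]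
    rfl

lemma exists_K (d : ℤ → Module.End ℂ V)
    (hnil : ∀ v : V, ∃ K : ℤ, ∀ l : ℤ, K ≤ l → d l v = 0)
    (w : Polynomial ℂ ⊗[ℂ] V) :
    ∃ K : ℤ, ∀ l : ℤ, K ≤ l → LinearMap.lTensor (Polynomial ℂ) (d l) w = 0 := by
  induction w using TensorProduct.induction_on with
  | zero => exact ⟨0, fun l _ => map_zero _⟩
  | tmul f v =>
    obtain ⟨K, hK⟩ := hnil v
    exact ⟨K, fun l hl => by rw [LinearMap.lTensor_tmul, hK l hl, tmul_zero]⟩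
  | add x y hx hy =>
    obtain ⟨K1, h1⟩ := hx
    obtain ⟨K2, h2⟩ := hy
    exact ⟨max K1 K2, fun l hl => by
      rw [map_add, h1 l (le_trans (le_max_left _ _) hl), h2 l (le_trans (le_max_right _ _) hl),
        add_zero]⟩

end AuxVir

section CoreVir

variable {V : Type*} [AddCommGroup V] [Module ℂ V]

lemma core_coeff_mem (lam b : ℂ) (hlam : lam ≠ 0)
    (d : ℤ → Module.End ℂ V)
    (hnil : ∀ v : V, ∃ K : ℤ, ∀ l : ℤ, K ≤ l → d l v = 0)
    (M : Submodule ℂ (Polynomial ℂ ⊗[ℂ] V))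
    (hMd : ∀ i : ℤ, ∀ w ∈ M, tensorD (omegaD lam b) d i w ∈ M)
    (N : ℕ) (u : ℕ → V)
    (hw : (∑ k ∈ Finset.range (N+1), ((X : ℂ[X])^k) ⊗ₜ[ℂ] u k) ∈ M) :
    ∀ j : ℕ, j < N + 2 →
      (∑ k ∈ Finset.range (N+1), ((Qp b k).coeff j) ⊗ₜ[ℂ] u k) ∈ M := by
  set w : Polynomial ℂ ⊗[ℂ] V := ∑ k ∈ Finset.range (N+1), ((X : ℂ[X])^k) ⊗ₜ[ℂ] u k with hwdef
  obtain ⟨K, hK⟩ := exists_K d hnil w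
  have step : ∀ l : ℤ, K ≤ l →
      (∑ k ∈ Finset.range (N+1),
        ((((X : ℂ[X]) + Polynomial.C ((l:ℂ)*(b-1))) * ((X : ℂ[X]) - Polynomial.C (l:ℂ))^k)
          ⊗ₜ[ℂ] u k)) ∈ M := by
    intro l hl
    have h1 : tensorD (omegaD lam b) d l w ∈ M := hMd l w hw
    have h2 : tensorD (omegaD lam b) d l w = LinearMap.rTensor V (omegaD lam b l) w := by
      rw [tensorD, LinearMap.add_apply, hK l hl, add_zero]
    have homega : ∀ k : ℕ, omegaD lam b l ((X : ℂ[X])^k)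
        = lam ^ l • (((X : ℂ[X]) + Polynomial.C ((l:ℂ)*(b-1)))
            * ((X : ℂ[X]) - Polynomial.C (l:ℂ))^k) := by
      intro k
      show lam ^ l • (((X : ℂ[X]) + Polynomial.C ((l:ℂ)*(b-1)))
          * ((X:ℂ[X])^k).comp ((X : ℂ[X]) - Polynomial.C (l:ℂ))) = _
      rw [X_pow_comp]
    have h3 : LinearMap.rTensor V (omegaD lam b l) w
        = lam ^ l • (∑ k ∈ Finset.range (N+1),
          ((((X : ℂ[X]) + Polynomial.C ((l:ℂ)*(b-1))) * ((X : ℂ[X]) - Polynomial.C (l:ℂ))^k)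
            ⊗ₜ[ℂ] u k)) := by
      rw [hwdef, map_sum, Finset.smul_sum]
      refine Finset.sum_congr rfl fun k _ => ?_
      rw [LinearMap.rTensor_tmul, homega k, smul_tmul']
    rw [h2, h3] at h1
    have h4 := Submodule.smul_mem M (lam ^ l)⁻¹ h1
    rwa [inv_smul_smul₀ (zpow_ne_zero l hlam)] at h4
  have hpows : ∀ l : ℤ, K ≤ l →
      (∑ j : Fin (N+2), ((l : ℂ))^(j : ℕ) •
        (∑ k ∈ Finset.range (N+1), ((Qp b k).coeff (j : ℕ)) ⊗ₜ[ℂ] u k)) ∈ M := by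
    intro l hl
    have heq : (∑ j : Fin (N+2), ((l : ℂ))^(j : ℕ) •
        (∑ k ∈ Finset.range (N+1), ((Qp b k).coeff (j : ℕ)) ⊗ₜ[ℂ] u k))
        = ∑ k ∈ Finset.range (N+1),
          ((((X : ℂ[X]) + Polynomial.C ((l:ℂ)*(b-1))) * ((X : ℂ[X]) - Polynomial.C (l:ℂ))^k)
            ⊗ₜ[ℂ] u k) := by
      simp_rw [Finset.smul_sum]
      rw [Finset.sum_comm]
      refine Finset.sum_congr rfl fun k hk => ?_
      have hk' : k < N + 1 := Finset.mem_range.1 hk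
      have hdeg : (Qp b k).natDegree < N + 2 := lt_of_le_of_lt (Qp_natDegree b k) (by omega)
      have heval : ((X : ℂ[X]) + Polynomial.C ((l:ℂ)*(b-1))) * ((X : ℂ[X]) - Polynomial.C (l:ℂ))^k
          = ∑ j : Fin (N+2), ((l:ℂ))^(j : ℕ) • (Qp b k).coeff (j : ℕ) := by
        rw [← Qp_eval b (l : ℂ) k, eval_eq_sum_range' hdeg,
          Fin.sum_univ_eq_sum_range (fun j => ((l:ℂ))^j • (Qp b k).coeff j) (N+2)]
        refine Finset.sum_congr rfl fun j _ => ?_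
        rw [← C_pow, mul_comm, ← smul_eq_C_mul]
      rw [heval, sum_tmul]
      refine Finset.sum_congr rfl fun j _ => ?_
      rw [smul_tmul']
    rw [heq]
    exact step l hl
  intro j hj
  exact int_poly_mem M
    (fun j : Fin (N+2) => ∑ k ∈ Finset.range (N+1), ((Qp b k).coeff (j : ℕ)) ⊗ₜ[ℂ] u k)
    K hpows ⟨j, hj⟩

lemma pow_tmul_mem (lam b : ℂ) (hlam : lam ≠ 0)
    (d : ℤ → Module.End ℂ V)
    (hnil : ∀ v : V, ∃ K : ℤ, ∀ l : ℤ, K ≤ l → d l v = 0)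
    (M : Submodule ℂ (Polynomial ℂ ⊗[ℂ] V))
    (hMd : ∀ i : ℤ, ∀ w ∈ M, tensorD (omegaD lam b) d i w ∈ M)
    (v : V) (hv : ((1 : ℂ[X]) ⊗ₜ[ℂ] v) ∈ M) :
    ∀ m : ℕ, (((X : ℂ[X])^m) ⊗ₜ[ℂ] v) ∈ M := by
  intro m
  induction m with
  | zero => simpa using hv
  | succ m ih =>
    classical
    set u : ℕ → V := fun k => if k = m then v else 0 with hu
    have hsum : (∑ k ∈ Finset.range (m+1), ((X : ℂ[X])^k) ⊗ₜ[ℂ] u k)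
        = ((X : ℂ[X])^m) ⊗ₜ[ℂ] v := by
      rw [Finset.sum_eq_single m]
      · simp [hu]
      · intro k _ hkm
        simp [hu, hkm]
      · intro hm
        exact absurd (Finset.self_mem_range_succ m) hm
    have hcore := core_coeff_mem lam b hlam d hnil M hMd m u (by rw [hsum]; exact ih) 0 (by omega)
    rw [Finset.sum_eq_single m] at hcore
    · rw [Qp_coeff_zero] at hcore
      simpa [hu] using hcore
    · intro k _ hkm
      simp [hu, hkm]
    · intro hm
      exact absurd (Finset.self_mem_range_succ m) hm

lemma top_tmul_mem (lam b : ℂ) (hlam : lam ≠ 0) (hb : b ≠ 1)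
    (d : ℤ → Module.End ℂ V)
    (hnil : ∀ v : V, ∃ K : ℤ, ∀ l : ℤ, K ≤ l → d l v = 0)
    (M : Submodule ℂ (Polynomial ℂ ⊗[ℂ] V))
    (hMd : ∀ i : ℤ, ∀ w ∈ M, tensorD (omegaD lam b) d i w ∈ M)
    (N : ℕ) (u : ℕ → V)
    (hw : (∑ k ∈ Finset.range (N+1), ((X : ℂ[X])^k) ⊗ₜ[ℂ] u k) ∈ M) :
    ((1 : ℂ[X]) ⊗ₜ[ℂ] u N) ∈ M := by
  have hcore := core_coeff_mem lam b hlam d hnil M hMd N u hw (N+1) (by omega)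
  rw [Finset.sum_eq_single N] at hcore
  · rw [Qp_coeff_top] at hcore
    have hC : (Polynomial.C ((b-1) * (-1)^N) : ℂ[X]) ⊗ₜ[ℂ] u N
        = ((b-1) * (-1)^N) • ((1 : ℂ[X]) ⊗ₜ[ℂ] u N) := by
      rw [smul_tmul']
      congr 1
      rw [smul_eq_C_mul, mul_one]
    rw [hC] at hcore
    have hne : ((b-1) * (-1)^N) ≠ 0 :=
      mul_ne_zero (sub_ne_zero.2 hb) (pow_ne_zero N (by norm_num))
    have := Submodule.smul_mem M ((b-1) * (-1)^N)⁻¹ hcore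
    rwa [inv_smul_smul₀ hne] at this
  · intro k hk hkN
    have hk' : k < N + 1 := Finset.mem_range.1 hk
    have : (Qp b k).coeff (N+1) = 0 := by
      apply coeff_eq_zero_of_natDegree_lt
      have := Qp_natDegree b k
      omega
    rw [this, zero_tmul]
  · intro hN
    exact absurd (Finset.self_mem_range_succ N) hN

end CoreVir

/-- for `b ≠ 1` and `V` a highest weight module or a Whittaker module
`L_{ψ_n,θ}` (the key property being that every vector of `V` is killed by `d_l` for `l`
large), every submodule of `Ω(λ,b) ⊗ V` has the form `Ω(λ,b) ⊗ X` for a submodule `X ⊆ V`. -/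
theorem submodules_of_tensor {V : Type*} [AddCommGroup V] [Module ℂ V]
    (lam b : ℂ) (hlam : lam ≠ 0) (hb : b ≠ 1)
    (d : ℤ → Module.End ℂ V) (cV : Module.End ℂ V) (hrep : VirRep d cV)
    (hnil : ∀ v : V, ∃ K : ℤ, ∀ l : ℤ, K ≤ l → d l v = 0)
    (M : Submodule ℂ (Polynomial ℂ ⊗[ℂ] V))
    (hM : VirInvariant (tensorD (omegaD lam b) d) (tensorC 0 cV) M) :
    ∃ X : Submodule ℂ V, VirInvariant d cV X ∧
      M = LinearMap.range (LinearMap.lTensor (Polynomial ℂ) X.subtype) := by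
  classical
  set X0 : Submodule ℂ V := M.comap ((TensorProduct.mk ℂ (Polynomial ℂ) V) 1) with hX0def
  have hmem : ∀ v : V, v ∈ X0 ↔ ((1:ℂ[X]) ⊗ₜ[ℂ] v) ∈ M := by
    intro v
    rw [hX0def, Submodule.mem_comap, TensorProduct.mk_apply]
  have hMd := hM.1
  have hft : ∀ (f : ℂ[X]) (v : V), v ∈ X0 → (f ⊗ₜ[ℂ] v) ∈ M := by
    intro f v hv
    have hrepf : f ⊗ₜ[ℂ] v
        = ∑ k ∈ Finset.range (f.natDegree+1), (f.coeff k) • (((X:ℂ[X])^k) ⊗ₜ[ℂ] v) := by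
      conv_lhs => rw [f.as_sum_range' (f.natDegree+1) (lt_add_one _)]
      rw [sum_tmul]
      refine Finset.sum_congr rfl fun k _ => ?_
      rw [show ((monomial k) (f.coeff k) : ℂ[X]) = f.coeff k • (X:ℂ[X])^k from by
        rw [smul_eq_C_mul, ← C_mul_X_pow_eq_monomial], smul_tmul']
    rw [hrepf]
    exact Submodule.sum_mem _ fun k _ => Submodule.smul_mem _ _
      (pow_tmul_mem lam b hlam d hnil M hMd v ((hmem v).1 hv) k)
  have hL2 : ∀ N : ℕ, ∀ u : ℕ → V,
      (∑ k ∈ Finset.range (N+1), ((X:ℂ[X])^k) ⊗ₜ[ℂ] u k) ∈ M → ∀ k, k ≤ N → u k ∈ X0 := by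
    intro N
    induction N with
    | zero =>
      intro u hw k hk
      have hk0 : k = 0 := by omega
      rw [hk0, hmem]
      exact top_tmul_mem lam b hlam hb d hnil M hMd 0 u hw
    | succ N ih =>
      intro u hw k hk
      have htop : u (N+1) ∈ X0 := by
        rw [hmem]
        exact top_tmul_mem lam b hlam hb d hnil M hMd (N+1) u hw
      rcases Nat.lt_or_ge k (N+1) with h | h
      · refine ih u ?_ k (by omega)
        have hsub : (∑ k ∈ Finset.range (N+1), ((X:ℂ[X])^k) ⊗ₜ[ℂ] u k) =
            (∑ k ∈ Finset.range (N+1+1), ((X:ℂ[X])^k) ⊗ₜ[ℂ] u k)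
              - ((X:ℂ[X])^(N+1)) ⊗ₜ[ℂ] u (N+1) := by
          conv_rhs => rw [Finset.sum_range_succ]
          abel
        rw [hsub]
        exact Submodule.sub_mem M hw
          (pow_tmul_mem lam b hlam d hnil M hMd _ ((hmem _).1 htop) (N+1))
      · have hkN : k = N+1 := by omega
        rw [hkN]
        exact htop
  refine ⟨X0, ⟨?_, ?_⟩, ?_⟩
  · intro i v hv
    have h1 : ((1:ℂ[X]) ⊗ₜ[ℂ] v) ∈ M := (hmem v).1 hv
    have hXv : ((X:ℂ[X]) ⊗ₜ[ℂ] v) ∈ M := by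
      have := pow_tmul_mem lam b hlam d hnil M hMd v h1 1
      rwa [pow_one] at this
    have hD := hMd i _ h1
    have homega1 : omegaD lam b i (1:ℂ[X])
        = lam ^ i • ((X:ℂ[X]) + Polynomial.C ((i:ℂ)*(b-1))) := by
      show lam ^ i • (((X:ℂ[X]) + Polynomial.C ((i:ℂ)*(b-1)))
        * (1:ℂ[X]).comp ((X:ℂ[X]) - Polynomial.C (i:ℂ))) = _
      rw [one_comp, mul_one]
    have hexp : (1:ℂ[X]) ⊗ₜ[ℂ] (d i v) = tensorD (omegaD lam b) d i ((1:ℂ[X]) ⊗ₜ[ℂ] v)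
        - lam ^ i • ((X:ℂ[X]) ⊗ₜ[ℂ] v) - (lam ^ i * ((i:ℂ) * (b-1))) • ((1:ℂ[X]) ⊗ₜ[ℂ] v) := by
      rw [tensorD, LinearMap.add_apply, LinearMap.rTensor_tmul, LinearMap.lTensor_tmul,
        homega1]
      rw [← smul_tmul', add_tmul, smul_add]
      rw [show (Polynomial.C ((i:ℂ)*(b-1)) : ℂ[X]) ⊗ₜ[ℂ] v
          = ((i:ℂ)*(b-1)) • ((1:ℂ[X]) ⊗ₜ[ℂ] v) from by
        rw [smul_tmul']
        congr 1
        rw [smul_eq_C_mul, mul_one]]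
      rw [smul_smul]
      abel
    rw [hmem, hexp]
    exact Submodule.sub_mem M (Submodule.sub_mem M hD (Submodule.smul_mem M _ hXv))
      (Submodule.smul_mem M _ h1)
  · intro v hv
    have h1 := hM.2 _ ((hmem v).1 hv)
    have hc : tensorC (0 : Module.End ℂ (Polynomial ℂ)) cV ((1:ℂ[X]) ⊗ₜ[ℂ] v)
        = (1:ℂ[X]) ⊗ₜ[ℂ] (cV v) := by
      rw [tensorC, LinearMap.add_apply, LinearMap.rTensor_tmul, LinearMap.lTensor_tmul]
      simp
    rw [hc] at h1
    exact (hmem _).2 h1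
  · refine le_antisymm (fun w hw => ?_) (fun w hw => ?_)
    · obtain ⟨N, u, hu, hrepw⟩ := exists_repr w
      have hX0 : ∀ k, k ≤ N → u k ∈ X0 := hL2 N u (by rw [← hrepw]; exact hw)
      refine ⟨∑ k ∈ Finset.range (N+1), ((X:ℂ[X])^k) ⊗ₜ[ℂ]
        (if h : k ≤ N then (⟨u k, hX0 k h⟩ : X0) else 0), ?_⟩
      rw [map_sum, hrepw]
      refine Finset.sum_congr rfl fun k hk => ?_
      rw [LinearMap.lTensor_tmul]
      have hkN : k ≤ N := by
        have := Finset.mem_range.1 hk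
        omega
      rw [dif_pos hkN]
      rfl
    · obtain ⟨t, rfl⟩ := hw
      induction t using TensorProduct.induction_on with
      | zero =>
        rw [map_zero]
        exact M.zero_mem
      | tmul f x =>
        rw [LinearMap.lTensor_tmul]
        exact hft f x.1 x.2
      | add a c ha hc =>
        rw [map_add]
        exact M.add_mem ha hc
end
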